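/- Let f : I → ℝ with I ⊆ (0,∞) an interval be harmonically s-convex for some s ∈ (0,1], and let a,b ∈ I with a < b. If f is integrable on [a,b], then 2^{s-1} f(2ab/(a+b)) ≤ (ab/(b-a)) ∫_a^b f(x)/x² dx. -/

import Mathlib

open MeasureTheory Set intervalIntegral

theorem hermite_hadamard_left_harmonically_s_convex
    (I : Set ℝ) (hI : I ⊆ Set.Ioi (0:ℝ)) (hconv : Convex ℝ I)
    (f : ℝ → ℝ) (s : ℝ) (hs : s ∈ Set.Ioc (0:ℝ) 1)
    (hhsc : ∀ x ∈ I, ∀ y ∈ I, ∀ t ∈ Set.Icc (0:ℝ) 1,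
      f (x * y / (t * x + (1 - t) * y)) ≤ t ^ s * f y + (1 - t) ^ s * f x)
    (a b : ℝ) (ha : a ∈ I) (hb : b ∈ I) (hab : a < b)
    (hint : IntervalIntegrable f MeasureTheory.volume a b) :
    (2:ℝ) ^ (s - 1) * f (2 * a * b / (a + b)) ≤
      (a * b / (b - a)) * ∫ x in a..b, f x / x ^ 2 := by
  obtain ⟨hs0, hs1⟩ := hs
  have ha0 : (0:ℝ) < a := hI ha
  have hb0 : (0:ℝ) < b := hI hb
  have hab0 : (0:ℝ) < a * b := mul_pos ha0 hb0
  have hIcc : Set.Icc a b ⊆ I := hconv.ordConnected.out ha hb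
  set g : ℝ → ℝ := fun u => f (a * b / u) with hgdef
  set h : ℝ → ℝ := fun x => f x / x ^ 2 with hhdef
  -- the map u ↦ a*b/u sends (a,b) into itself
  have hmap : ∀ u ∈ Set.Ioo a b, a * b / u ∈ Set.Ioo a b := by
    intro u hu
    have hu0 : (0:ℝ) < u := lt_trans ha0 hu.1
    constructor
    · rw [lt_div_iff₀ hu0]; nlinarith [hu.2]
    · rw [div_lt_iff₀ hu0]; nlinarith [hu.1]
  have himage : (fun u => a * b / u) '' Set.Ioo a b = Set.Ioo a b := by
    apply Set.Subset.antisymm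
    · rintro x ⟨u, hu, rfl⟩; exact hmap u hu
    · intro x hx
      refine ⟨a * b / x, hmap x hx, ?_⟩
      have hx0 : x ≠ 0 := (lt_trans ha0 hx.1).ne'
      field_simp
  have hinj : Set.InjOn (fun u => a * b / u) (Set.Ioo a b) := by
    intro u hu v hv hEq
    have hu0 : u ≠ 0 := (lt_trans ha0 hu.1).ne'
    have hv0 : v ≠ 0 := (lt_trans ha0 hv.1).ne'
    field_simp at hEq
    exact hEq.symm
  have hderiv : ∀ u ∈ Set.Ioo a b,
      HasDerivWithinAt (fun u => a * b / u) (-(a * b) / u ^ 2) (Set.Ioo a b) u := by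
    intro u hu
    have hu0 : u ≠ 0 := (lt_trans ha0 hu.1).ne'
    have H := ((hasDerivAt_inv hu0).const_mul (a * b)).hasDerivWithinAt
      (s := Set.Ioo a b)
    have h1 : (fun x : ℝ => a * b * x⁻¹) = fun u => a * b / u := by
      funext x; rw [div_eq_mul_inv]
    rw [h1] at H
    rw [show -(a * b) / u ^ 2 = a * b * -(u ^ 2)⁻¹ by ring]
    exact H
  -- integrability of h on (a,b)
  have hhint : IntervalIntegrable h volume a b := by
    have hcont : ContinuousOn (fun x => (x ^ 2)⁻¹) (Set.uIcc a b) := by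
      apply ContinuousOn.inv₀ (continuous_pow 2).continuousOn
      intro x hx
      rw [Set.uIcc_of_le hab.le] at hx
      exact pow_ne_zero 2 (lt_of_lt_of_le ha0 hx.1).ne'
    simpa [hhdef, div_eq_mul_inv] using hint.mul_continuousOn hcont
  have hhIoo : IntegrableOn h (Set.Ioo a b) volume :=
    (intervalIntegrable_iff_integrableOn_Ioo_of_le hab.le).mp hhint
  -- pointwise simplification of the substituted integrand
  have hpt : ∀ u ∈ Set.Ioo a b,
      |(-(a * b) / u ^ 2)| • h (a * b / u) = g u / (a * b) := by
    intro u hu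
    have hu0 : (0:ℝ) < u := lt_trans ha0 hu.1
    have habu : (0:ℝ) < a * b / u := div_pos hab0 hu0
    have : |(-(a * b) / u ^ 2)| = a * b / u ^ 2 := by
      rw [neg_div, abs_neg, abs_of_nonneg (by positivity)]
    rw [this, smul_eq_mul, hhdef, hgdef]
    field_simp
  -- change of variables
  have hsub : ∫ x in Set.Ioo a b, h x = ∫ u in Set.Ioo a b, g u / (a * b) := by
    calc ∫ x in Set.Ioo a b, h x
        = ∫ x in (fun u => a * b / u) '' Set.Ioo a b, h x := by rw [himage]
      _ = ∫ u in Set.Ioo a b, |(-(a * b) / u ^ 2)| • h (a * b / u) :=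
          integral_image_eq_integral_abs_deriv_smul measurableSet_Ioo hderiv hinj h
      _ = ∫ u in Set.Ioo a b, g u / (a * b) :=
          setIntegral_congr_fun measurableSet_Ioo hpt
  have hsub' : ∫ u in Set.Ioo a b, g u = (a * b) * ∫ x in Set.Ioo a b, h x := by
    rw [hsub, MeasureTheory.integral_div, mul_div_cancel₀ _ hab0.ne']
  -- integrability of g on (a,b)
  have hgIoo : IntegrableOn g (Set.Ioo a b) volume := by
    have h1 : IntegrableOn (fun u => |(-(a * b) / u ^ 2)| • h (a * b / u))
        (Set.Ioo a b) volume := by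
      rw [← integrableOn_image_iff_integrableOn_abs_deriv_smul
        measurableSet_Ioo hderiv hinj h, himage]
      exact hhIoo
    have h2 : IntegrableOn (fun u => g u / (a * b)) (Set.Ioo a b) volume :=
      h1.congr_fun hpt measurableSet_Ioo
    have h3 := h2.const_mul (a * b)
    exact MeasureTheory.IntegrableOn.congr_fun h3 (fun u _ => by
      simp only [mul_div_cancel₀ _ hab0.ne']) measurableSet_Ioo
  have hgIntInt : IntervalIntegrable g volume a b :=
    (intervalIntegrable_iff_integrableOn_Ioo_of_le hab.le).mpr hgIoo
  -- reflected function
  have hgrefl : IntervalIntegrable (fun u => g (a + b - u)) volume a b := by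
    have := hgIntInt.comp_sub_left (a + b)
    simpa using this.symm
  have hgreflIoo : IntegrableOn (fun u => g (a + b - u)) (Set.Ioo a b) volume :=
    (intervalIntegrable_iff_integrableOn_Ioo_of_le hab.le).mp hgrefl
  have hreflInt : ∫ u in Set.Ioo a b, g (a + b - u) = ∫ u in Set.Ioo a b, g u := by
    have h1 : ∫ u in a..b, g (a + b - u) = ∫ u in (a+b)-b..(a+b)-a, g u :=
      intervalIntegral.integral_comp_sub_left g (a + b)
    simp only [add_sub_cancel_right, add_sub_cancel_left] at h1
    rw [intervalIntegral.integral_of_le hab.le, intervalIntegral.integral_of_le hab.le,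
      MeasureTheory.integral_Ioc_eq_integral_Ioo,
      MeasureTheory.integral_Ioc_eq_integral_Ioo] at h1
    exact h1
  -- pointwise key inequality
  set c : ℝ := ((1:ℝ)/2) ^ s with hcdef
  have hc0 : 0 < c := Real.rpow_pos_of_pos (by norm_num) s
  have hkey : ∀ u ∈ Set.Ioo a b,
      f (2 * a * b / (a + b)) ≤ c * (g u + g (a + b - u)) := by
    intro u hu
    have hu0 : (0:ℝ) < u := lt_trans ha0 hu.1
    have hv : a + b - u ∈ Set.Ioo a b := by
      constructor <;> [linarith [hu.2]; linarith [hu.1]]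
    have hv0 : (0:ℝ) < a + b - u := lt_trans ha0 hv.1
    have hxI : a * b / (a + b - u) ∈ I :=
      hIcc (Set.Ioo_subset_Icc_self (hmap _ hv))
    have hyI : a * b / u ∈ I :=
      hIcc (Set.Ioo_subset_Icc_self (hmap _ hu))
    have ht : (1/2 : ℝ) ∈ Set.Icc (0:ℝ) 1 := by norm_num
    have H := hhsc _ hxI _ hyI _ ht
    have heq : (a * b / (a + b - u)) * (a * b / u) /
        ((1/2) * (a * b / (a + b - u)) + (1 - 1/2) * (a * b / u))
        = 2 * a * b / (a + b) := by
      have hsum : (0:ℝ) < a + b := by linarith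
      field_simp
      ring
    rw [heq] at H
    have h12 : (1 - 1/2 : ℝ) = 1/2 := by norm_num
    rw [h12] at H
    calc f (2 * a * b / (a + b)) ≤ c * f (a * b / u) + c * f (a * b / (a + b - u)) := H
      _ = c * (g u + g (a + b - u)) := by rw [hgdef]; ring
  -- integrate the inequality
  have hmono : ∫ _ in Set.Ioo a b, f (2 * a * b / (a + b)) ≤
      ∫ u in Set.Ioo a b, c * (g u + g (a + b - u)) := by
    apply MeasureTheory.setIntegral_mono_on
    · exact integrableOn_const measure_Ioo_lt_top.ne
    · exact ((hgIoo.add hgreflIoo).const_mul c)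
    · exact measurableSet_Ioo
    · exact hkey
  have hvol : (volume (Set.Ioo a b)).toReal = b - a := by
    rw [Real.volume_Ioo, ENNReal.toReal_ofReal (by linarith)]
  rw [MeasureTheory.setIntegral_const, measureReal_def, hvol, smul_eq_mul,
    MeasureTheory.integral_const_mul, MeasureTheory.integral_add hgIoo hgreflIoo,
    hreflInt, hsub'] at hmono
  -- hmono : (b-a) * f M ≤ c * ((ab * ∫h) + (ab * ∫h))
  have hIeq : ∫ x in a..b, f x / x ^ 2 = ∫ x in Set.Ioo a b, h x := by
    rw [intervalIntegral.integral_of_le hab.le, MeasureTheory.integral_Ioc_eq_integral_Ioo]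
  rw [hIeq]
  set J : ℝ := ∫ x in Set.Ioo a b, h x with hJ
  have hpow : (2:ℝ) ^ (s - 1) * (2 * c) = 1 := by
    have : c = (2:ℝ) ^ (-s) := by
      rw [hcdef, one_div, Real.inv_rpow (by norm_num : (0:ℝ) ≤ 2),
        ← Real.rpow_neg (by norm_num : (0:ℝ) ≤ 2)]
    rw [this]
    have h2 : (2:ℝ) = (2:ℝ) ^ (1:ℝ) := by rw [Real.rpow_one]
    calc (2:ℝ) ^ (s - 1) * ((2:ℝ) * (2:ℝ) ^ (-s))
        = (2:ℝ) ^ (s - 1) * ((2:ℝ) ^ (1:ℝ) * (2:ℝ) ^ (-s)) := by rw [← h2]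
      _ = (2:ℝ) ^ ((s - 1) + (1 + -s)) := by
          rw [← Real.rpow_add (by norm_num : (0:ℝ) < 2),
            ← Real.rpow_add (by norm_num : (0:ℝ) < 2)]
      _ = 1 := by
          have hz : s - 1 + (1 + -s) = 0 := by ring
          rw [hz, Real.rpow_zero]
  have hfinal : (2:ℝ) ^ (s - 1) * ((b - a) * f (2 * a * b / (a + b))) ≤
      (2:ℝ) ^ (s - 1) * (c * (a * b * J + a * b * J)) :=
    mul_le_mul_of_nonneg_left hmono (Real.rpow_pos_of_pos (by norm_num) _).le
  have hsimp : (2:ℝ) ^ (s - 1) * (c * (a * b * J + a * b * J)) = a * b * J := by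
    have : (2:ℝ) ^ (s - 1) * (c * (a * b * J + a * b * J))
        = ((2:ℝ) ^ (s - 1) * (2 * c)) * (a * b * J) := by ring
    rw [this, hpow, one_mul]
  rw [hsimp] at hfinal
  rw [div_mul_eq_mul_div, le_div_iff₀ (by linarith : (0:ℝ) < b - a)]
  nlinarith [hfinal]
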